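/- Let α be a unit-speed curve with curvature κ(s) ≠ 0 and torsion τ(s) and Frenet frame (t,n,b). If α is a slant helix, i.e. there is a fixed unit vector U with ⟨n(s),U⟩ = δ constant, then w = ⟨t,U⟩ satisfies w² = (1-δ²)(τ/κ)²/(1+(τ/κ)²), and moreover σ(s) = (κ²/(κ²+τ²)^{3/2})·(τ/κ)' is the constant ±δ/√(1-δ²). -/

import Mathlib

open Real
open scoped RealInnerProductSpace

set_option maxHeartbeats 1000000 in
/-- For a slant helix (principal normal makes a constant angle `⟨n,U⟩ = δ`, `|δ| < 1`, with
a fixed unit direction `U`), the function `w = ⟨t,U⟩` satisfies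
`w² = (1-δ²)(τ/κ)²/(1+(τ/κ)²)`, and `σ = (κ²/(κ²+τ²)^{3/2})·(τ/κ)'` is the constant
`±δ/√(1-δ²)`. -/
theorem slant_helix_invariant_constant
    (I : Set ℝ) (hI : IsOpen I) (hIc : I.OrdConnected)
    (α t n b : ℝ → EuclideanSpace ℝ (Fin 3)) (κ τ : ℝ → ℝ)
    (hκ : ∀ s ∈ I, 0 < κ s)
    (hunit : ∀ s ∈ I, ‖deriv α s‖ = 1)
    (ht : ∀ s ∈ I, t s = deriv α s)
    (hdt : ∀ s ∈ I, DifferentiableAt ℝ t s)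
    (hdn : ∀ s ∈ I, DifferentiableAt ℝ n s)
    (hdb : ∀ s ∈ I, DifferentiableAt ℝ b s)
    (hft : ∀ s ∈ I, deriv t s = κ s • n s)
    (hfn : ∀ s ∈ I, deriv n s = -κ s • t s + τ s • b s)
    (hfb : ∀ s ∈ I, deriv b s = -τ s • n s)
    (hortho : ∀ s ∈ I, ‖t s‖ = 1 ∧ ‖n s‖ = 1 ∧ ‖b s‖ = 1 ∧
      ⟪t s, n s⟫ = 0 ∧ ⟪t s, b s⟫ = 0 ∧ ⟪n s, b s⟫ = 0)
    (hτκ : ∀ s ∈ I, DifferentiableAt ℝ (fun u => τ u / κ u) s)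
    (U : EuclideanSpace ℝ (Fin 3)) (hU : ‖U‖ = 1)
    (δ : ℝ) (hδ : |δ| < 1)
    (hslant : ∀ s ∈ I, ⟪n s, U⟫ = δ) :
    (∀ s ∈ I, ⟪t s, U⟫ ^ 2 = (1 - δ ^ 2) * (τ s / κ s) ^ 2 / (1 + (τ s / κ s) ^ 2)) ∧
      ∃ ε : ℝ, (ε = 1 ∨ ε = -1) ∧
        ∀ s ∈ I, (κ s) ^ 2 / ((κ s) ^ 2 + (τ s) ^ 2) ^ ((3 : ℝ) / 2) *
            deriv (fun u => τ u / κ u) s = ε * δ / Real.sqrt (1 - δ ^ 2) := by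
  classical
  have hδ2 : 0 < 1 - δ ^ 2 := by
    have h := abs_lt.mp hδ
    nlinarith
  -- Parseval / expansion of ‖U‖² in the orthonormal basis (t,n,b)
  have hsum : ∀ s ∈ I, ⟪t s, U⟫ ^ 2 + δ ^ 2 + ⟪b s, U⟫ ^ 2 = 1 := by
    intro s hs
    obtain ⟨h1, h2, h3, h4, h5, h6⟩ := hortho s hs
    have hone : Orthonormal ℝ ![t s, n s, b s] := by
      constructor
      · intro i
        fin_cases i <;>
          simp only [Matrix.cons_val_zero, Matrix.cons_val_one, Matrix.head_cons,
            Matrix.cons_val_two, Matrix.tail_cons] <;> assumption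
      · intro i j hij
        fin_cases i <;> fin_cases j <;>
          simp only [Matrix.cons_val_zero, Matrix.cons_val_one, Matrix.head_cons,
            Matrix.cons_val_two, Matrix.tail_cons] <;>
          first
            | exact absurd rfl hij
            | exact h4
            | exact h5
            | exact h6
            | (rw [real_inner_comm]; first | exact h4 | exact h5 | exact h6)
    have card_eq : Fintype.card (Fin 3) = Module.finrank ℝ (EuclideanSpace ℝ (Fin 3)) := by
      simp [finrank_euclideanSpace_fin]
    let B0 := basisOfOrthonormalOfCardEqFinrank hone card_eq
    have hB0 : ⇑B0 = ![t s, n s, b s] := coe_basisOfOrthonormalOfCardEqFinrank hone card_eq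
    let B : OrthonormalBasis (Fin 3) ℝ (EuclideanSpace ℝ (Fin 3)) :=
      B0.toOrthonormalBasis (by rwa [hB0])
    have hB : ⇑B = ![t s, n s, b s] := by
      rw [show ⇑B = ⇑B0 from Module.Basis.coe_toOrthonormalBasis B0 _, hB0]
    have hP := B.sum_inner_mul_inner U U
    rw [hB, Fin.sum_univ_three] at hP
    simp only [Matrix.cons_val_zero, Matrix.cons_val_one, Matrix.head_cons,
      Matrix.cons_val_two, Matrix.tail_cons] at hP
    have hUU : ⟪U, U⟫ = 1 := by
      rw [real_inner_self_eq_norm_sq, hU]; norm_num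
    have c1 : ⟪U, t s⟫ = ⟪t s, U⟫ := real_inner_comm _ _
    have c2 : ⟪U, n s⟫ = ⟪n s, U⟫ := real_inner_comm _ _
    have c3 : ⟪U, b s⟫ = ⟪b s, U⟫ := real_inner_comm _ _
    rw [c1, c2, c3, hslant s hs, hUU] at hP
    linear_combination hP
  -- derivative of ⟪b ·, U⟫
  have hyd : ∀ s ∈ I, HasDerivAt (fun u => ⟪b u, U⟫) (-(τ s * δ)) s := by
    intro s hs
    have h := ((hdb s hs).hasDerivAt).inner ℝ (hasDerivAt_const s U)
    rw [hfb s hs] at h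
    have e : ⟪b s, (0 : EuclideanSpace ℝ (Fin 3))⟫ + ⟪-τ s • n s, U⟫ = -(τ s * δ) := by
      rw [inner_zero_right, zero_add, neg_smul, inner_neg_left, real_inner_smul_left,
        hslant s hs]
    exact e ▸ h
  -- derivative of ⟪t ·, U⟫
  have hwd : ∀ s ∈ I, HasDerivAt (fun u => ⟪t u, U⟫) (κ s * δ) s := by
    intro s hs
    have h := ((hdt s hs).hasDerivAt).inner ℝ (hasDerivAt_const s U)
    rw [hft s hs] at h
    have e : ⟪t s, (0 : EuclideanSpace ℝ (Fin 3))⟫ + ⟪κ s • n s, U⟫ = κ s * δ := by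
      rw [inner_zero_right, zero_add, real_inner_smul_left, hslant s hs]
    exact e ▸ h
  -- κ w = τ y
  have hrel : ∀ s ∈ I, κ s * ⟪t s, U⟫ = τ s * ⟪b s, U⟫ := by
    intro s hs
    have h := ((hdn s hs).hasDerivAt).inner ℝ (hasDerivAt_const s U)
    rw [hfn s hs] at h
    have hd : deriv (fun u => ⟪n u, U⟫) s = 0 := by
      have hev : (fun u => ⟪n u, U⟫) =ᶠ[nhds s] fun _ => δ :=
        Filter.eventuallyEq_of_mem (hI.mem_nhds hs) fun u hu => hslant u hu
      rw [hev.deriv_eq]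
      exact deriv_const s δ
    have h0 := h.deriv
    rw [hd] at h0
    rw [inner_zero_right, zero_add, inner_add_left, neg_smul, inner_neg_left,
      real_inner_smul_left, real_inner_smul_left] at h0
    linarith
  have hwy : ∀ s ∈ I, ⟪t s, U⟫ = (τ s / κ s) * ⟪b s, U⟫ := by
    intro s hs
    have hκs := (hκ s hs).ne'
    rw [div_mul_eq_mul_div, eq_div_iff hκs]
    linarith [hrel s hs]
  have hy2 : ∀ s ∈ I, ⟪b s, U⟫ ^ 2 * (1 + (τ s / κ s) ^ 2) = 1 - δ ^ 2 := by
    intro s hs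
    have h1 := hsum s hs
    have h2 := hwy s hs
    linear_combination h1 - (⟪t s, U⟫ + (τ s / κ s) * ⟪b s, U⟫) * h2
  have hyne : ∀ s ∈ I, ⟪b s, U⟫ ≠ 0 := by
    intro s hs h0
    have h := hy2 s hs
    rw [h0] at h
    have : (0:ℝ) = 1 - δ ^ 2 := by linear_combination h
    linarith
  -- the derivative identity m' y = δ κ (1+m²)
  have hm' : ∀ s ∈ I, deriv (fun u => τ u / κ u) s * ⟪b s, U⟫
      = δ * κ s * (1 + (τ s / κ s) ^ 2) := by
    intro s hs
    have hκs := (hκ s hs).ne'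
    set y : ℝ := ⟪b s, U⟫ with hy
    have hprod : HasDerivAt (fun u => (τ u / κ u) * ⟪b u, U⟫)
        (deriv (fun u => τ u / κ u) s * y + (τ s / κ s) * (-(τ s * δ))) s :=
      ((hτκ s hs).hasDerivAt).mul (hyd s hs)
    have hev : (fun u => ⟪t u, U⟫) =ᶠ[nhds s] fun u => (τ u / κ u) * ⟪b u, U⟫ :=
      Filter.eventuallyEq_of_mem (hI.mem_nhds hs) fun u hu => hwy u hu
    have heq : κ s * δ = deriv (fun u => τ u / κ u) s * y
        + (τ s / κ s) * (-(τ s * δ)) := by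
      rw [← (hwd s hs).deriv, hev.deriv_eq, hprod.deriv]
    have h2 : deriv (fun u => τ u / κ u) s * y = κ s * δ + (τ s / κ s) * (τ s * δ) := by
      linarith [heq]
    rw [h2]
    field_simp
  constructor
  · -- first claim
    intro s hs
    have h1m : (0:ℝ) < 1 + (τ s / κ s) ^ 2 := by positivity
    have h2 := hwy s hs
    have h3 := hy2 s hs
    rw [eq_div_iff h1m.ne']
    linear_combination ((1 + (τ s / κ s) ^ 2) * (⟪t s, U⟫ + (τ s / κ s) * ⟪b s, U⟫)) * h2
      + (τ s / κ s) ^ 2 * h3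
  · -- second claim
    by_cases hne : ∃ s, s ∈ I
    · obtain ⟨s₀, hs₀⟩ := hne
      have hyc : ContinuousOn (fun u => ⟪b u, U⟫) I := fun s hs =>
        (((hdb s hs).inner ℝ (differentiableAt_const U)).continuousAt).continuousWithinAt
      have key : ∀ u ∈ I, ∀ v ∈ I, ⟪b u, U⟫ < 0 → 0 < ⟪b v, U⟫ → False := by
        intro u hu v hv hneg hpos
        have hsub : Set.uIcc u v ⊆ I := hIc.uIcc_subset hu hv
        have h0 : (0:ℝ) ∈ Set.uIcc ⟪b u, U⟫ ⟪b v, U⟫ :=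
          Set.mem_uIcc.mpr (Or.inl ⟨hneg.le, hpos.le⟩)
        obtain ⟨c, hc, hc0⟩ := intermediate_value_uIcc (hyc.mono hsub) h0
        exact hyne c (hsub hc) hc0
      refine ⟨if 0 < ⟪b s₀, U⟫ then 1 else -1, by split <;> simp, ?_⟩
      intro s hs
      set ε : ℝ := if 0 < ⟪b s₀, U⟫ then 1 else -1 with hε
      have habs : |⟪b s, U⟫| = ε * ⟪b s, U⟫ := by
        rcases (hyne s₀ hs₀).lt_or_gt with h0 | h0
        · have hsneg : ⟪b s, U⟫ < 0 := by
            rcases (hyne s hs).lt_or_gt with h | h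
            · exact h
            · exact absurd (key s₀ hs₀ s hs h0 h) (by simp)
          rw [hε, if_neg (by linarith), abs_of_neg hsneg]; ring
        · have hspos : 0 < ⟪b s, U⟫ := by
            rcases (hyne s hs).lt_or_gt with h | h
            · exact absurd (key s hs s₀ hs₀ h h0) (by simp)
            · exact h
          rw [hε, if_pos h0, abs_of_pos hspos]; ring
      -- abbreviations
      have hκs := hκ s hs
      set m : ℝ := τ s / κ s with hmdef
      set y : ℝ := ⟪b s, U⟫ with hy
      set m' : ℝ := deriv (fun u => τ u / κ u) s with hm'def
      have hA : (0:ℝ) < 1 + m ^ 2 := by positivity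
      set A : ℝ := 1 + m ^ 2 with hAdef
      have hsA : (0:ℝ) < Real.sqrt A := Real.sqrt_pos.mpr hA
      set sA : ℝ := Real.sqrt A with hsAdef
      -- (κ²+τ²)^(3/2) = κ³ * A * √A
      have hτm : τ s = m * κ s := by
        rw [hmdef]; field_simp
      have hP : ((κ s) ^ 2 + (τ s) ^ 2) ^ ((3:ℝ)/2) = κ s ^ 3 * (A * sA) := by
        have h1 : (κ s) ^ 2 + (τ s) ^ 2 = (κ s) ^ 2 * A := by
          rw [hτm, hAdef]; ring
        rw [h1, Real.mul_rpow (by positivity) hA.le]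
        congr 1
        · rw [← Real.rpow_natCast (κ s) 2, ← Real.rpow_mul hκs.le,
            ← Real.rpow_natCast (κ s) 3]
          norm_num
        · rw [show ((3:ℝ)/2) = 1 + 1/2 by norm_num, Real.rpow_add hA,
            Real.rpow_one, ← Real.sqrt_eq_rpow]
      -- √(1-δ²) = |y| * √A
      have hsq : (1 - δ ^ 2) = (y * sA) ^ 2 := by
        have h := hy2 s hs
        rw [← hmdef, ← hy] at h
        rw [mul_pow, hsAdef, Real.sq_sqrt hA.le]
        linear_combination -h
      have hD : Real.sqrt (1 - δ ^ 2) = |y| * sA := by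
        rw [hsq, Real.sqrt_sq_eq_abs, abs_mul, abs_of_pos hsA]
      have hm'y : m' * y = δ * κ s * A := by
        have h := hm' s hs
        rw [← hmdef, ← hy, ← hm'def, ← hAdef] at h
        exact h
      rw [hP, hD]
      have hyabs : (0:ℝ) < |y| := abs_pos.mpr (hyne s hs)
      rw [div_mul_eq_mul_div, div_eq_div_iff (by positivity) (by positivity)]
      calc κ s ^ 2 * m' * (|y| * sA) = κ s ^ 2 * sA * ε * (m' * y) := by
            rw [habs]; ring
        _ = κ s ^ 2 * sA * ε * (δ * κ s * A) := by rw [hm'y]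
        _ = ε * δ * (κ s ^ 3 * (A * sA)) := by ring
    · refine ⟨1, Or.inl rfl, ?_⟩
      intro s hs
      exact absurd ⟨s, hs⟩ hne
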